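/- Under the stated semigroup-family setting, let 1 ≤ k ≤ p and assume σ_{k−1} < σ_k < σ_{k+1} (with the conventions σ₀ = −∞ and, if k = r, σ_{k+1} = σ_{r+1}). Then lim_{τ→∞} λ_k^τ · e^{σ_k τ} = ⟨η_k, q_k⟩². -/

import Mathlib

open scoped RealInnerProductSpace ENNReal
open Submodule Filter

noncomputable section
set_option maxHeartbeats 4000000
set_option linter.unusedSectionVars false
set_option linter.unusedVariables false
set_option linter.deprecated false

variable {H : Type*} [NormedAddCommGroup H] [InnerProductSpace ℝ H] [CompleteSpace H]

/-- Orthogonal projection onto `U`, as an operator `H → H` (defined to be `0` in the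
degenerate case where `U` admits no orthogonal projection). -/
noncomputable def proj (U : Submodule ℝ H) : H →L[ℝ] H := by
  classical
  exact if h : HasOrthogonalProjection U then
    (haveI := h; U.subtypeL ∘L orthogonalProjection U)
  else 0

/-- Squared Hilbert–Schmidt norm of an operator, computed in a fixed Hilbert basis of `H`. -/
noncomputable def hsNormSq (A : H →L[ℝ] H) : ℝ≥0∞ :=
  ∑' i : (exists_hilbertBasis ℝ H).choose,
    (‖A ((exists_hilbertBasis ℝ H).choose_spec.choose i)‖₊ : ℝ≥0∞) ^ 2

/-- Hilbert–Schmidt (Frobenius) norm of an operator. -/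
noncomputable def hsNorm (A : H →L[ℝ] H) : ℝ := Real.sqrt (hsNormSq A).toReal

/-- Projection distance `d_F(U, W) = ‖P_{Wᗮ} P_U‖_F`. -/
noncomputable def dF (U W : Submodule ℝ H) : ℝ := hsNorm ((proj Wᗮ) ∘L (proj U))

/-- Gap distance `d₂(U, W) = ‖P_{Wᗮ} P_U‖₂`. -/
noncomputable def d2 (U W : Submodule ℝ H) : ℝ := ‖(proj Wᗮ) ∘L (proj U)‖


/-- A Ritz decomposition of (the compression to `Φ` of) `T`: an orthonormal basis
`γ₁, …, γ_n` of the `n`-dimensional subspace `Φ` with `P_Φ T γ_i = λ_i γ_i` and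
`λ₁ ≥ λ₂ ≥ ⋯ ≥ λ_n` (so the `λ_i` are the Ritz values of `T` on `Φ`, in decreasing
order with multiplicity). -/
def RitzData {H : Type*} [NormedAddCommGroup H] [InnerProductSpace ℝ H] [CompleteSpace H]
    (Φ : Submodule ℝ H) (T : H →L[ℝ] H) (n : ℕ) (lam : ℕ → ℝ) (γ : ℕ → H) : Prop :=
  (∀ i ∈ Set.Icc 1 n, ∀ j ∈ Set.Icc 1 n, ⟪γ i, γ j⟫ = if i = j then (1 : ℝ) else 0) ∧
  span ℝ (γ '' Set.Icc 1 n) = Φ ∧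
  (∀ i ∈ Set.Icc 1 n, proj Φ (T (γ i)) = lam i • γ i) ∧
  (∀ i ∈ Set.Icc 1 n, ∀ j ∈ Set.Icc 1 n, i ≤ j → lam j ≤ lam i)

lemma proj_apply (U : Submodule ℝ H) [HasOrthogonalProjection U] (x : H) :
    proj U x = (orthogonalProjection U x : H) := by
  simp [proj, dif_pos ‹HasOrthogonalProjection U›]

lemma proj_mem (U : Submodule ℝ H) [HasOrthogonalProjection U] (x : H) : proj U x ∈ U := by
  rw [proj_apply]; exact (orthogonalProjection U x).2

lemma inner_proj (U : Submodule ℝ H) [HasOrthogonalProjection U] (x y : H) (hy : y ∈ U) :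
    ⟪y, proj U x⟫ = ⟪y, x⟫ := by
  rw [proj_apply]
  have h := U.starProjection_inner_eq_zero x y hy
  have : ⟪y, x - (orthogonalProjection U x : H)⟫ = 0 := by
    rw [real_inner_comm]; exact h
  rw [inner_sub_right] at this
  linarith

lemma onb_inner_sum (v : ℕ → H) (s : Finset ℕ)
    (hv : ∀ i ∈ s, ∀ j ∈ s, ⟪v i, v j⟫ = if i = j then (1:ℝ) else 0)
    (f g : ℕ → ℝ) :
    ⟪∑ i ∈ s, f i • v i, ∑ j ∈ s, g j • v j⟫ = ∑ i ∈ s, f i * g i := by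
  classical
  rw [sum_inner]
  refine Finset.sum_congr rfl fun i hi => ?_
  rw [inner_sum]
  have : ∀ j ∈ s, ⟪f i • v i, g j • v j⟫ = if j = i then f i * g i else 0 := by
    intro j hj
    rw [real_inner_smul_left, real_inner_smul_right, hv i hi j hj]
    by_cases h : i = j
    · subst h; simp
    · simp [h, Ne.symm h]
  rw [Finset.sum_congr rfl this, Finset.sum_ite_eq' s i (fun _ => f i * g i), if_pos hi]

lemma onb_inner_single (v : ℕ → H) (s : Finset ℕ)
    (hv : ∀ i ∈ s, ∀ j ∈ s, ⟪v i, v j⟫ = if i = j then (1:ℝ) else 0)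
    (m : ℕ) (hm : m ∈ s) (g : ℕ → ℝ) :
    ⟪v m, ∑ j ∈ s, g j • v j⟫ = g m := by
  classical
  rw [inner_sum]
  have : ∀ j ∈ s, ⟪v m, g j • v j⟫ = if j = m then g m else 0 := by
    intro j hj
    rw [real_inner_smul_right, hv m hm j hj]
    by_cases h : m = j
    · subst h; simp
    · simp [h, Ne.symm h]
  rw [Finset.sum_congr rfl this, Finset.sum_ite_eq' s m (fun _ => g m), if_pos hm]

lemma exists_kernel_vec {k : ℕ} (hk : 1 ≤ k) (A : (Fin k → ℝ) →ₗ[ℝ] (Fin (k-1) → ℝ)) :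
    ∃ c : Fin k → ℝ, c ≠ 0 ∧ A c = 0 := by
  have h1 : Module.finrank ℝ (Fin k → ℝ) = k := Module.finrank_fin_fun ℝ
  have h2 : Module.finrank ℝ (Fin (k-1) → ℝ) = k - 1 := Module.finrank_fin_fun ℝ
  have hker : LinearMap.ker A ≠ ⊥ := by
    intro hbot
    have := LinearMap.finrank_range_add_finrank_ker A
    rw [hbot, finrank_bot, h1] at this
    have hle : Module.finrank ℝ (LinearMap.range A) ≤ k - 1 := by
      have := Submodule.finrank_le (LinearMap.range A)
      omega
    omega
  obtain ⟨c, hc, hc0⟩ := Submodule.exists_mem_ne_zero_of_ne_bot hker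
  exact ⟨c, hc0, hc⟩

lemma onb_inner_sum' {ι : Type*} [Fintype ι] [DecidableEq ι] (v : ι → H)
    (hv : ∀ i j, ⟪v i, v j⟫ = if i = j then (1:ℝ) else 0) (f g : ι → ℝ) :
    ⟪∑ i, f i • v i, ∑ j, g j • v j⟫ = ∑ i, f i * g i := by
  classical
  rw [sum_inner]
  refine Finset.sum_congr rfl fun i _ => ?_
  rw [inner_sum]
  have : ∀ j ∈ Finset.univ, ⟪f i • v i, g j • v j⟫ = if j = i then f i * g i else 0 := by
    intro j _
    rw [real_inner_smul_left, real_inner_smul_right, hv i j]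
    by_cases h : i = j
    · subst h; simp
    · simp [h, Ne.symm h]
  rw [Finset.sum_congr rfl this, Finset.sum_ite_eq' Finset.univ i (fun _ => f i * g i),
    if_pos (Finset.mem_univ i)]

lemma sum_Icc_one_eq_sum_fin {M : Type*} [AddCommMonoid M] (k : ℕ) (f : ℕ → M) :
    ∑ m ∈ Finset.Icc 1 k, f m = ∑ j : Fin k, f (j.1+1) := by
  rw [← Finset.Ico_add_one_right_eq_Icc, Finset.sum_Ico_eq_sum_range]
  rw [Fin.sum_univ_eq_sum_range (fun j => f (j+1)) k]
  exact Finset.sum_congr (by simp) (fun i _ => by rw [Nat.add_comm])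

/-- expansion of elements of `Φ` in the Ritz basis. -/
lemma span_expansion (Φ : Submodule ℝ H) (n : ℕ) (γ : ℕ → H)
    (hON : ∀ i ∈ Set.Icc 1 n, ∀ j ∈ Set.Icc 1 n, ⟪γ i, γ j⟫ = if i = j then (1:ℝ) else 0)
    (hsp : span ℝ (γ '' Set.Icc 1 n) = Φ) :
    ∀ u ∈ Φ, u = ∑ j ∈ Finset.Icc 1 n, ⟪γ j, u⟫ • γ j := by
  classical
  set L : H →L[ℝ] H := ∑ j ∈ Finset.Icc 1 n, (innerSL ℝ (γ j)).smulRight (γ j) with hL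
  have hLapp : ∀ u : H, L u = ∑ j ∈ Finset.Icc 1 n, ⟪γ j, u⟫ • γ j := by
    intro u
    rw [hL, ContinuousLinearMap.sum_apply]
    exact Finset.sum_congr rfl fun j _ => by rw [ContinuousLinearMap.smulRight_apply, innerSL_apply_apply]
  intro u hu
  rw [← hsp] at hu
  have key : ∀ u ∈ span ℝ (γ '' Set.Icc 1 n), L u = u := by
    intro u hu
    induction hu using Submodule.span_induction with
    | mem x hx =>
      obtain ⟨m, hm, rfl⟩ := hx
      rw [hLapp]
      have : ∀ j ∈ Finset.Icc 1 n, ⟪γ j, γ m⟫ • γ j = if j = m then γ j else 0 := by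
        intro j hj
        rw [Finset.mem_Icc] at hj
        rw [hON j (Set.mem_Icc.2 hj) m hm]
        by_cases h : j = m
        · simp [h]
        · simp [h]
      rw [Finset.sum_congr rfl this, Finset.sum_ite_eq' _ m (fun j => γ j),
        if_pos (Finset.mem_Icc.2 (Set.mem_Icc.1 hm))]
    | zero => simp
    | add x y _ _ hx hy => rw [map_add, hx, hy]
    | smul t x _ hx => rw [map_smul, hx]
  have h := key u hu
  rw [hLapp] at h
  exact h.symm

/-- Rayleigh quotient formula on `Φ`. -/
lemma ritz_rayleigh (Φ : Submodule ℝ H) [HasOrthogonalProjection Φ] (Tt : H →L[ℝ] H)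
    (n : ℕ) (lamt : ℕ → ℝ) (γ : ℕ → H) (hRD : RitzData Φ Tt n lamt γ) :
    ∀ u ∈ Φ, ⟪u, Tt u⟫ = ∑ j ∈ Finset.Icc 1 n, lamt j * ⟪γ j, u⟫^2 := by
  obtain ⟨hON, hsp, heig, _⟩ := hRD
  intro u hu
  have hONf : ∀ i ∈ Finset.Icc 1 n, ∀ j ∈ Finset.Icc 1 n, ⟪γ i, γ j⟫ = if i = j then (1:ℝ) else 0 := by
    intro i hi j hj
    exact hON i (Set.mem_Icc.2 (Finset.mem_Icc.1 hi)) j (Set.mem_Icc.2 (Finset.mem_Icc.1 hj))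
  have hexp := span_expansion Φ n γ hON hsp u hu
  set b : ℕ → ℝ := fun j => ⟪γ j, u⟫ with hb
  -- ⟪u, Tt u⟫ = ⟪u, proj Φ (Tt u)⟫
  have h1 : ⟪u, Tt u⟫ = ⟪u, proj Φ (Tt u)⟫ := by
    have horth : Tt u - proj Φ (Tt u) ∈ Φᗮ := by
      rw [proj_apply]; exact Φ.sub_starProjection_mem_orthogonal (Tt u)
    have := (Submodule.mem_orthogonal Φ (Tt u - proj Φ (Tt u))).1 horth u hu
    rw [inner_sub_right] at this
    linarith
  -- proj Φ (Tt u) = ∑ b j * lamt j • γ j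
  have h2 : proj Φ (Tt u) = ∑ j ∈ Finset.Icc 1 n, (b j * lamt j) • γ j := by
    conv_lhs => rw [hexp]
    rw [map_sum, map_sum]
    refine Finset.sum_congr rfl fun j hj => ?_
    rw [map_smul, map_smul, heig j (Set.mem_Icc.2 (Finset.mem_Icc.1 hj))]
    rw [smul_smul, mul_comm]
  rw [h1, h2]
  conv_lhs => rw [hexp]
  rw [onb_inner_sum γ _ hONf b (fun j => b j * lamt j)]
  exact Finset.sum_congr rfl fun j _ => by rw [hb]; ring
/-- upper bound direction: a unit vector in `Φ` orthogonal to `q 1, …, q (k-1)` with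
Rayleigh quotient at least `lamt k`. -/
lemma ritz_upper (Φ : Submodule ℝ H) [HasOrthogonalProjection Φ] (Tt : H →L[ℝ] H)
    (n : ℕ) (lamt : ℕ → ℝ) (γ : ℕ → H) (hRD : RitzData Φ Tt n lamt γ)
    (k : ℕ) (hk1 : 1 ≤ k) (hkn : k ≤ n) (q : ℕ → H) :
    ∃ u : H, ‖u‖ = 1 ∧ u ∈ Φ ∧ (∀ l ∈ Finset.Icc 1 (k-1), ⟪q l, u⟫ = 0) ∧
      lamt k ≤ ⟪u, Tt u⟫ := by
  classical
  obtain ⟨hON, hsp, heig, hmono⟩ := hRD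
  have hmemIcc : ∀ j : Fin k, j.1 + 1 ∈ Set.Icc 1 n := fun j => Set.mem_Icc.2 ⟨by omega, by omega⟩
  -- the kernel vector
  set B : (Fin k → ℝ) →ₗ[ℝ] H :=
    { toFun := fun c => ∑ j : Fin k, c j • γ (j.1+1)
      map_add' := by intro x y; simp [add_smul, Finset.sum_add_distrib]
      map_smul' := by intro t x; simp [smul_smul, Finset.smul_sum] } with hB
  set A : (Fin k → ℝ) →ₗ[ℝ] (Fin (k-1) → ℝ) :=
    { toFun := fun c i => ⟪q (i.1+1), B c⟫
      map_add' := by intro x y; funext i; simp [inner_add_right]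
      map_smul' := by intro t x; funext i; simp [inner_smul_right]
      } with hA
  obtain ⟨c, hc0, hAc⟩ := exists_kernel_vec hk1 A
  set u₀ : H := ∑ j : Fin k, c j • γ (j.1+1) with hu₀
  have hBc : B c = u₀ := rfl
  -- orthonormality of the sub-family
  have hONfin : ∀ i j : Fin k, ⟪γ (i.1+1), γ (j.1+1)⟫ = if i = j then (1:ℝ) else 0 := by
    intro i j
    rw [hON _ (hmemIcc i) _ (hmemIcc j)]
    by_cases h : i = j
    · simp [h]
    · have : i.1 + 1 ≠ j.1 + 1 := by
        intro hh; exact h (Fin.ext (by omega))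
      simp [h, this, Fin.val_inj]
  have hnorm : ‖u₀‖^2 = ∑ j : Fin k, (c j)^2 := by
    rw [← real_inner_self_eq_norm_sq, hu₀, onb_inner_sum' _ hONfin]
    exact Finset.sum_congr rfl fun j _ => (sq (c j)).symm
  have hS : 0 < ∑ j : Fin k, (c j)^2 := by
    obtain ⟨j, hj⟩ := Function.ne_iff.1 hc0
    exact Finset.sum_pos' (fun i _ => sq_nonneg _)
      ⟨j, Finset.mem_univ j, lt_of_le_of_ne (sq_nonneg _) (Ne.symm (pow_ne_zero 2 hj))⟩
  have hu₀norm : 0 < ‖u₀‖ := by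
    have h2 : 0 < ‖u₀‖^2 := by rw [hnorm]; exact hS
    nlinarith [norm_nonneg u₀]
  have hu₀Φ : u₀ ∈ Φ := by
    refine Submodule.sum_mem _ fun j _ => Submodule.smul_mem _ _ ?_
    rw [← hsp]
    exact subset_span ⟨j.1+1, hmemIcc j, rfl⟩
  -- coefficients b
  set b : ℕ → ℝ := fun m => ⟪γ m, u₀⟫ with hbdef
  -- inner with q l vanishes
  have hqu : ∀ l ∈ Finset.Icc 1 (k-1), ⟪q l, u₀⟫ = 0 := by
    intro l hl
    rw [Finset.mem_Icc] at hl
    have := congrFun hAc ⟨l - 1, by omega⟩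
    simpa [hA, hBc, show l - 1 + 1 = l by omega] using this
  -- Rayleigh value
  have hray := ritz_rayleigh Φ Tt n lamt γ ⟨hON, hsp, heig, hmono⟩ u₀ hu₀Φ
  -- b m = coefficient: for m ∈ Icc 1 n, b m = (if m ≤ k then cN m else 0)
  set cN : ℕ → ℝ := fun m => if h : 1 ≤ m ∧ m ≤ k then c ⟨m - 1, by omega⟩ else 0 with hcN
  have hu₀' : u₀ = ∑ m ∈ Finset.Icc 1 k, cN m • γ m := by
    rw [sum_Icc_one_eq_sum_fin k (fun m => cN m • γ m), hu₀]
    refine Finset.sum_congr rfl fun j _ => ?_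
    have h1 : (1:ℕ) ≤ j.1 + 1 := by omega
    have h2 : j.1 + 1 ≤ k := by omega
    rw [hcN]
    simp only [h1, h2, and_self, dif_pos]
    congr 1
  have hb_eq : ∀ m ∈ Finset.Icc 1 n, b m = if m ∈ Finset.Icc 1 k then cN m else 0 := by
    intro m hm
    by_cases h : m ∈ Finset.Icc 1 k
    · rw [if_pos h]
      show ⟪γ m, u₀⟫ = cN m
      have hONk : ∀ i ∈ Finset.Icc 1 k, ∀ j ∈ Finset.Icc 1 k, ⟪γ i, γ j⟫ = if i = j then (1:ℝ) else 0 := by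
        intro i hi j hj
        rw [Finset.mem_Icc] at hi hj
        exact hON i (Set.mem_Icc.2 ⟨hi.1, le_trans hi.2 hkn⟩) j (Set.mem_Icc.2 ⟨hj.1, le_trans hj.2 hkn⟩)
      rw [hu₀']
      exact onb_inner_single γ _ hONk m h cN
    · rw [if_neg h]
      show ⟪γ m, u₀⟫ = 0
      rw [hu₀', inner_sum]
      refine Finset.sum_eq_zero fun j hj => ?_
      rw [Finset.mem_Icc] at hm hj h
      have : m ≠ j := by omega
      rw [real_inner_smul_right, hON m (Set.mem_Icc.2 hm) j (Set.mem_Icc.2 ⟨hj.1, le_trans hj.2 hkn⟩)]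
      simp [this]
  -- lower bound for the Rayleigh value
  have hlam_nonneg : ∀ j ∈ Finset.Icc 1 k, lamt k ≤ lamt j := by
    intro j hj
    rw [Finset.mem_Icc] at hj
    exact hmono j (Set.mem_Icc.2 ⟨hj.1, le_trans hj.2 hkn⟩) k (Set.mem_Icc.2 ⟨hk1, hkn⟩) hj.2
  have hray2 : lamt k * ‖u₀‖^2 ≤ ⟪u₀, Tt u₀⟫ := by
    rw [hray]
    have hsplit : ∑ j ∈ Finset.Icc 1 n, lamt j * (b j)^2
        = ∑ j ∈ Finset.Icc 1 k, lamt j * (cN j)^2 := by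
      rw [← Finset.sum_subset (Finset.Icc_subset_Icc_right hkn : Finset.Icc 1 k ⊆ Finset.Icc 1 n)]
      · refine Finset.sum_congr rfl fun j hj => ?_
        rw [hb_eq j (Finset.Icc_subset_Icc_right hkn hj), if_pos hj]
      · intro j hj hj'
        rw [hb_eq j hj, if_neg hj']
        ring
    calc lamt k * ‖u₀‖^2 = ∑ j ∈ Finset.Icc 1 k, lamt k * (cN j)^2 := by
            rw [← Finset.mul_sum, hnorm, sum_Icc_one_eq_sum_fin k (fun m => (cN m)^2)]
            congr 1
            refine Finset.sum_congr rfl fun j _ => ?_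
            rw [hcN]
            have h1 : (1:ℕ) ≤ j.1 + 1 := by omega
            have h2 : j.1 + 1 ≤ k := by omega
            simp only [h1, h2, and_self, dif_pos]
            congr 2
      _ ≤ ∑ j ∈ Finset.Icc 1 k, lamt j * (cN j)^2 := by
            refine Finset.sum_le_sum fun j hj => ?_
            exact mul_le_mul_of_nonneg_right (hlam_nonneg j hj) (sq_nonneg _)
      _ = ∑ j ∈ Finset.Icc 1 n, lamt j * (b j)^2 := hsplit.symm
      _ = ∑ j ∈ Finset.Icc 1 n, lamt j * ⟪γ j, u₀⟫^2 := rfl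
  refine ⟨‖u₀‖⁻¹ • u₀, ?_, Submodule.smul_mem _ _ hu₀Φ, ?_, ?_⟩
  · rw [norm_smul, norm_inv, norm_norm, inv_mul_cancel₀ (ne_of_gt hu₀norm)]
  · intro l hl
    rw [real_inner_smul_right, hqu l hl, mul_zero]
  · rw [map_smul, real_inner_smul_left, real_inner_smul_right]
    have h2 : (0:ℝ) < ‖u₀‖^2 := by positivity
    rw [← mul_assoc]
    have : ‖u₀‖⁻¹ * ‖u₀‖⁻¹ = (‖u₀‖^2)⁻¹ := by
      rw [sq, mul_inv]
    rw [this, ← sub_nonneg]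
    have hcalc : (‖u₀‖ ^ 2)⁻¹ * ⟪u₀, Tt u₀⟫ - lamt k
        = (‖u₀‖^2)⁻¹ * (⟪u₀, Tt u₀⟫ - lamt k * ‖u₀‖^2) := by field_simp
    rw [hcalc]
    have h3 : (0:ℝ) ≤ ⟪u₀, Tt u₀⟫ - lamt k * ‖u₀‖^2 := by linarith
    positivity
/-- lower bound direction: a unit combination of `q 1, …, q k` with Rayleigh quotient
at most `lamt k`. -/
lemma ritz_lower (Φ : Submodule ℝ H) [HasOrthogonalProjection Φ] (Tt : H →L[ℝ] H)
    (n : ℕ) (lamt : ℕ → ℝ) (γ : ℕ → H) (hRD : RitzData Φ Tt n lamt γ)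
    (k : ℕ) (hk1 : 1 ≤ k) (hkn : k ≤ n) (q : ℕ → H)
    (hqON : ∀ i ∈ Finset.Icc 1 k, ∀ j ∈ Finset.Icc 1 k, ⟪q i, q j⟫ = if i = j then (1:ℝ) else 0)
    (hqΦ : ∀ i ∈ Finset.Icc 1 k, q i ∈ Φ) :
    ∃ a : ℕ → ℝ, (∑ m ∈ Finset.Icc 1 k, (a m)^2 = 1) ∧
      ⟪(∑ m ∈ Finset.Icc 1 k, a m • q m), Tt (∑ m ∈ Finset.Icc 1 k, a m • q m)⟫ ≤ lamt k := by
  classical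
  obtain ⟨hON, hsp, heig, hmono⟩ := hRD
  have hmemIccK : ∀ j : Fin k, j.1 + 1 ∈ Finset.Icc 1 k := fun j => Finset.mem_Icc.2 ⟨by omega, by omega⟩
  set B : (Fin k → ℝ) →ₗ[ℝ] H :=
    { toFun := fun c => ∑ j : Fin k, c j • q (j.1+1)
      map_add' := by intro x y; simp [add_smul, Finset.sum_add_distrib]
      map_smul' := by intro t x; simp [smul_smul, Finset.smul_sum] } with hB
  set A : (Fin k → ℝ) →ₗ[ℝ] (Fin (k-1) → ℝ) :=
    { toFun := fun c i => ⟪γ (i.1+1), B c⟫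
      map_add' := by intro x y; funext i; simp [inner_add_right]
      map_smul' := by intro t x; funext i; simp [inner_smul_right]
      } with hA
  obtain ⟨c, hc0, hAc⟩ := exists_kernel_vec hk1 A
  set u₀ : H := ∑ j : Fin k, c j • q (j.1+1) with hu₀
  have hBc : B c = u₀ := rfl
  have hONfin : ∀ i j : Fin k, ⟪q (i.1+1), q (j.1+1)⟫ = if i = j then (1:ℝ) else 0 := by
    intro i j
    rw [hqON _ (hmemIccK i) _ (hmemIccK j)]
    by_cases h : i = j
    · simp [h]
    · have : i.1 + 1 ≠ j.1 + 1 := by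
        intro hh; exact h (Fin.ext (by omega))
      simp [h, this, Fin.val_inj]
  have hnorm : ‖u₀‖^2 = ∑ j : Fin k, (c j)^2 := by
    rw [← real_inner_self_eq_norm_sq, hu₀, onb_inner_sum' _ hONfin]
    exact Finset.sum_congr rfl fun j _ => (sq (c j)).symm
  have hS : 0 < ∑ j : Fin k, (c j)^2 := by
    obtain ⟨j, hj⟩ := Function.ne_iff.1 hc0
    exact Finset.sum_pos' (fun i _ => sq_nonneg _)
      ⟨j, Finset.mem_univ j, lt_of_le_of_ne (sq_nonneg _) (Ne.symm (pow_ne_zero 2 hj))⟩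
  have hu₀norm : 0 < ‖u₀‖ := by
    have h2 : 0 < ‖u₀‖^2 := by rw [hnorm]; exact hS
    nlinarith [norm_nonneg u₀]
  have hu₀Φ : u₀ ∈ Φ := by
    refine Submodule.sum_mem _ fun j _ => Submodule.smul_mem _ _ (hqΦ _ (hmemIccK j))
  -- coefficients in the γ basis vanish below k
  have hb0 : ∀ m ∈ Finset.Icc 1 (k-1), ⟪γ m, u₀⟫ = 0 := by
    intro l hl
    rw [Finset.mem_Icc] at hl
    have := congrFun hAc ⟨l - 1, by omega⟩
    simpa [hA, hBc, show l - 1 + 1 = l by omega] using this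
  have hray := ritz_rayleigh Φ Tt n lamt γ ⟨hON, hsp, heig, hmono⟩ u₀ hu₀Φ
  have hexp := span_expansion Φ n γ hON hsp u₀ hu₀Φ
  have hnorm2 : ‖u₀‖^2 = ∑ j ∈ Finset.Icc 1 n, ⟪γ j, u₀⟫^2 := by
    have hONf : ∀ i ∈ Finset.Icc 1 n, ∀ j ∈ Finset.Icc 1 n, ⟪γ i, γ j⟫ = if i = j then (1:ℝ) else 0 := by
      intro i hi j hj
      exact hON i (Set.mem_Icc.2 (Finset.mem_Icc.1 hi)) j (Set.mem_Icc.2 (Finset.mem_Icc.1 hj))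
    have : ⟪u₀, u₀⟫ = ∑ j ∈ Finset.Icc 1 n, ⟪γ j, u₀⟫ * ⟪γ j, u₀⟫ := by
      conv_lhs => rw [hexp]
      exact onb_inner_sum γ _ hONf _ _
    rw [← real_inner_self_eq_norm_sq, this]
    exact Finset.sum_congr rfl fun j _ => (sq _).symm
  have hray2 : ⟪u₀, Tt u₀⟫ ≤ lamt k * ‖u₀‖^2 := by
    rw [hray, hnorm2, Finset.mul_sum]
    refine Finset.sum_le_sum fun j hj => ?_
    rw [Finset.mem_Icc] at hj
    by_cases h : j ≤ k - 1
    · rw [hb0 j (Finset.mem_Icc.2 ⟨hj.1, h⟩)]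
      simp
    · have hkj : k ≤ j := by omega
      have := hmono k (Set.mem_Icc.2 ⟨hk1, hkn⟩) j (Set.mem_Icc.2 hj) hkj
      exact mul_le_mul_of_nonneg_right this (sq_nonneg _)
  -- now normalize
  set a : ℕ → ℝ := fun m => if h : 1 ≤ m ∧ m ≤ k then ‖u₀‖⁻¹ * c ⟨m - 1, by omega⟩ else 0 with ha
  have hsum_eq : ∑ m ∈ Finset.Icc 1 k, a m • q m = ‖u₀‖⁻¹ • u₀ := by
    rw [sum_Icc_one_eq_sum_fin k (fun m => a m • q m), hu₀, Finset.smul_sum]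
    refine Finset.sum_congr rfl fun j _ => ?_
    have h1 : (1:ℕ) ≤ j.1 + 1 := by omega
    have h2 : j.1 + 1 ≤ k := by omega
    rw [ha]
    simp only [h1, h2, and_self, dif_pos]
    rw [smul_smul]
    congr 2
  have hsumsq : ∑ m ∈ Finset.Icc 1 k, (a m)^2 = 1 := by
    rw [sum_Icc_one_eq_sum_fin k (fun m => (a m)^2)]
    have : ∀ j : Fin k, (a (j.1+1))^2 = ‖u₀‖⁻¹^2 * (c j)^2 := by
      intro j
      have h1 : (1:ℕ) ≤ j.1 + 1 := by omega
      have h2 : j.1 + 1 ≤ k := by omega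
      rw [ha]
      simp only [h1, h2, and_self, dif_pos]
      rw [mul_pow]
      congr 3
    rw [Finset.sum_congr rfl (fun j _ => this j), ← Finset.mul_sum, ← hnorm]
    rw [inv_pow]
    field_simp
  refine ⟨a, hsumsq, ?_⟩
  rw [hsum_eq, map_smul, real_inner_smul_left, real_inner_smul_right, ← mul_assoc]
  have hinv : ‖u₀‖⁻¹ * ‖u₀‖⁻¹ = (‖u₀‖^2)⁻¹ := by rw [sq, mul_inv]
  rw [hinv, ← sub_nonneg]
  have h2 : (0:ℝ) < ‖u₀‖^2 := by positivity
  have hcalc : lamt k - (‖u₀‖ ^ 2)⁻¹ * ⟪u₀, Tt u₀⟫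
      = (‖u₀‖^2)⁻¹ * (lamt k * ‖u₀‖^2 - ⟪u₀, Tt u₀⟫) := by field_simp
  rw [hcalc]
  have h3 : (0:ℝ) ≤ lamt k * ‖u₀‖^2 - ⟪u₀, Tt u₀⟫ := by linarith
  positivity
/-- triangular-system bound: uniform control of the coefficients `a m` in terms of the
sizes of the partial sums. -/
lemma tri_bound (k : ℕ) (M : ℕ → ℕ → ℝ)
    (hMd : ∀ m ∈ Finset.Icc 1 (k-1), 0 < M m m)
    (hM1 : ∀ i ∈ Finset.Icc 1 (k-1), ∀ l ∈ Finset.Icc 1 (k-1), |M i l| ≤ 1) :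
    ∃ C, 0 ≤ C ∧ ∀ (a : ℕ → ℝ) (e : ℝ), 0 ≤ e →
      (∀ i ∈ Finset.Icc 1 (k-1), |∑ l ∈ Finset.Icc 1 i, a l * M i l| ≤ e) →
      ∀ m ∈ Finset.Icc 1 (k-1), |a m| ≤ C * e := by
  classical
  suffices h : ∀ j : ℕ, j ≤ k - 1 → ∃ C, 0 ≤ C ∧ ∀ (a : ℕ → ℝ) (e : ℝ), 0 ≤ e →
      (∀ i ∈ Finset.Icc 1 (k-1), |∑ l ∈ Finset.Icc 1 i, a l * M i l| ≤ e) →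
      ∀ m ∈ Finset.Icc 1 j, |a m| ≤ C * e by
    obtain ⟨C, hC0, hC⟩ := h (k-1) le_rfl
    exact ⟨C, hC0, hC⟩
  intro j
  induction j with
  | zero =>
    intro _
    exact ⟨0, le_rfl, by intro a e he hyp m hm; simp at hm⟩
  | succ j IH =>
    intro hjk
    obtain ⟨C, hC0, hC⟩ := IH (by omega)
    have hj1 : j + 1 ∈ Finset.Icc 1 (k-1) := Finset.mem_Icc.2 ⟨by omega, hjk⟩
    have hμ : 0 < M (j+1) (j+1) := hMd (j+1) hj1
    set C' : ℝ := max C ((1 + j * C) / M (j+1) (j+1)) with hC'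
    have hC'0 : 0 ≤ C' := le_trans hC0 (le_max_left _ _)
    refine ⟨C', hC'0, ?_⟩
    intro a e he hyp m hm
    rw [Finset.mem_Icc] at hm
    by_cases hmj : m ≤ j
    · calc |a m| ≤ C * e := hC a e he hyp m (Finset.mem_Icc.2 ⟨hm.1, hmj⟩)
        _ ≤ C' * e := mul_le_mul_of_nonneg_right (le_max_left _ _) he
    · have hmeq : m = j + 1 := by omega
      subst hmeq
      have hsum := hyp (j+1) hj1
      rw [Finset.sum_Icc_succ_top (by omega : 1 ≤ j + 1)] at hsum
      have htail : |∑ l ∈ Finset.Icc 1 j, a l * M (j+1) l| ≤ j * C * e := by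
        calc |∑ l ∈ Finset.Icc 1 j, a l * M (j+1) l|
            ≤ ∑ l ∈ Finset.Icc 1 j, |a l * M (j+1) l| := Finset.abs_sum_le_sum_abs _ _
          _ ≤ ∑ l ∈ Finset.Icc 1 j, C * e := by
              refine Finset.sum_le_sum fun l hl => ?_
              rw [Finset.mem_Icc] at hl
              have hlk : l ∈ Finset.Icc 1 (k-1) := Finset.mem_Icc.2 ⟨hl.1, by omega⟩
              have h1 := hC a e he hyp l (Finset.mem_Icc.2 hl)
              have h2 := hM1 (j+1) hj1 l hlk
              rw [abs_mul]
              calc |a l| * |M (j+1) l| ≤ (C * e) * 1 :=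
                    mul_le_mul h1 h2 (abs_nonneg _) (by positivity)
                _ = C * e := mul_one _
          _ = j * C * e := by
              rw [Finset.sum_const, Nat.card_Icc]
              simp
              ring
      have hterm : |a (j+1) * M (j+1) (j+1)| ≤ (1 + j * C) * e := by
        have := abs_sub_abs_le_abs_sub (a (j+1) * M (j+1) (j+1))
          (-(∑ l ∈ Finset.Icc 1 j, a l * M (j+1) l))
        rw [abs_neg, sub_neg_eq_add, add_comm] at this
        calc |a (j+1) * M (j+1) (j+1)|
            ≤ |∑ l ∈ Finset.Icc 1 j, a l * M (j+1) l + a (j+1) * M (j+1) (j+1)|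
              + |∑ l ∈ Finset.Icc 1 j, a l * M (j+1) l| := by
              have htri := abs_add_le (∑ l ∈ Finset.Icc 1 j, a l * M (j+1) l + a (j+1) * M (j+1) (j+1))
                (-(∑ l ∈ Finset.Icc 1 j, a l * M (j+1) l))
              rw [abs_neg] at htri
              calc |a (j+1) * M (j+1) (j+1)|
                  = |(∑ l ∈ Finset.Icc 1 j, a l * M (j+1) l + a (j+1) * M (j+1) (j+1))
                      + -(∑ l ∈ Finset.Icc 1 j, a l * M (j+1) l)| := by ring_nf
                _ ≤ _ := htri
          _ ≤ e + j * C * e := add_le_add hsum htail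
          _ = (1 + j * C) * e := by ring
      rw [abs_mul, abs_of_pos hμ] at hterm
      have : |a (j+1)| ≤ ((1 + j * C) / M (j+1) (j+1)) * e := by
        rw [div_mul_eq_mul_div, le_div_iff₀ hμ]
        linarith
      calc |a (j+1)| ≤ ((1 + j * C) / M (j+1) (j+1)) * e := this
        _ ≤ C' * e := mul_le_mul_of_nonneg_right (le_max_right _ _) he
/-- Long-lag-time limit of Ritz values: if `σ_{k−1} < σ_k < σ_{k+1}`
then `λ_k^τ e^{σ_k τ} → ⟨η_k, q_k⟩²` as `τ → ∞`. -/
theorem stmt5 {H : Type*} [NormedAddCommGroup H] [InnerProductSpace ℝ H] [CompleteSpace H]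
    (T : ℝ → H →L[ℝ] H)
    (hTsa : ∀ τ > (0 : ℝ), ∀ x y : H, ⟪T τ x, y⟫ = ⟪x, T τ y⟫)
    (hTpos : ∀ τ > (0 : ℝ), ∀ u : H, 0 ≤ ⟪u, T τ u⟫)
    (r : ℕ) (hr : 1 ≤ r) (η : ℕ → H) (σ : ℕ → ℝ)
    (hη : ∀ i ∈ Set.Icc 1 r, ∀ j ∈ Set.Icc 1 r, ⟪η i, η j⟫ = if i = j then (1 : ℝ) else 0)
    (hσ0 : 0 ≤ σ 1)
    (hσmono : ∀ i ∈ Set.Icc 1 (r + 1), ∀ j ∈ Set.Icc 1 (r + 1), i ≤ j → σ i ≤ σ j)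
    (hTeig : ∀ τ > (0 : ℝ), ∀ i ∈ Set.Icc 1 r, T τ (η i) = Real.exp (-σ i * τ) • η i)
    (hTinv : ∀ τ > (0 : ℝ), ∀ w ∈ (span ℝ (η '' Set.Icc 1 r))ᗮ,
      T τ w ∈ (span ℝ (η '' Set.Icc 1 r))ᗮ)
    (hTres : ∀ τ > (0 : ℝ), ∀ w ∈ (span ℝ (η '' Set.Icc 1 r))ᗮ,
      ⟪w, T τ w⟫ ≤ Real.exp (-σ (r + 1) * τ) * ‖w‖ ^ 2)
    (n : ℕ) (Φ : Submodule ℝ H) (hΦfd : FiniteDimensional ℝ Φ) (hΦn : Module.finrank ℝ Φ = n)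
    (lam : ℝ → ℕ → ℝ)
    (hritz : ∀ τ > (0 : ℝ), ∃ γ : ℕ → H, RitzData Φ (T τ) n (lam τ) γ)
    (hlin : LinearIndependent ℝ (fun i : Set.Icc 1 (min n r) => proj Φ (η i.1)))
    (q : ℕ → H)
    (hq : ∀ i ∈ Set.Icc 1 (min n r),
      q i = ‖proj Φ (η i) - ∑ l ∈ Finset.Ico 1 i, ⟪q l, η i⟫ • q l‖⁻¹ •
            (proj Φ (η i) - ∑ l ∈ Finset.Ico 1 i, ⟪q l, η i⟫ • q l))
    (k : ℕ) (hk1 : 1 ≤ k) (hkp : k ≤ min n r)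
    (hgap₁ : 2 ≤ k → σ (k - 1) < σ k) (hgap₂ : σ k < σ (k + 1)) :
    Filter.Tendsto (fun τ : ℝ => lam τ k * Real.exp (σ k * τ)) Filter.atTop
      (nhds (⟪η k, q k⟫ ^ 2)) := by
  classical
  haveI : CompleteSpace Φ := FiniteDimensional.complete ℝ Φ
  have hkn : k ≤ n := le_trans hkp (min_le_left n r)
  have hkr : k ≤ r := le_trans hkp (min_le_right n r)
  set K : Submodule ℝ H := span ℝ (η '' Set.Icc 1 r) with hK
  -- unit norms of the η's
  have hηnorm : ∀ i ∈ Set.Icc 1 r, ‖η i‖ = 1 := by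
    intro i hi
    have := hη i hi i hi
    rw [if_pos rfl, real_inner_self_eq_norm_sq] at this
    nlinarith [norm_nonneg (η i)]
  -- replacing η by its projection in inner products against Φ
  have hproj_inner : ∀ x : H, ∀ u ∈ Φ, ⟪x, u⟫ = ⟪proj Φ x, u⟫ := by
    intro x u hu
    have horth : x - proj Φ x ∈ Φᗮ := by
      rw [proj_apply]; exact Φ.sub_starProjection_mem_orthogonal _
    have h0 := (Submodule.mem_orthogonal Φ _).1 horth u hu
    rw [inner_sub_right] at h0
    have e1 : ⟪x, u⟫ = ⟪u, x⟫ := real_inner_comm u x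
    have e2 : ⟪proj Φ x, u⟫ = ⟪u, proj Φ x⟫ := real_inner_comm u _
    linarith
  -- ** Gram–Schmidt facts **
  have GS : ∀ i, 1 ≤ i → i ≤ k →
      q i ∈ Φ ∧ ‖q i‖ = 1 ∧
      q i ∈ span ℝ ((fun j : Set.Icc 1 (min n r) => proj Φ (η j.1)) ''
        {j : Set.Icc 1 (min n r) | (j : ℕ) ≤ i}) ∧
      (∀ l, 1 ≤ l → l < i → ⟪q l, q i⟫ = 0) ∧
      0 < ⟪η i, q i⟫ ∧
      proj Φ (η i) = ⟪η i, q i⟫ • q i + ∑ l ∈ Finset.Ico 1 i, ⟪q l, η i⟫ • q l := by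
    intro i
    induction i using Nat.strong_induction_on with
    | _ i IH =>
    intro h1i hik
    have hiIcc : i ∈ Set.Icc 1 (min n r) := Set.mem_Icc.2 ⟨h1i, le_trans hik hkp⟩
    have hqi := hq i hiIcc
    set t : H := proj Φ (η i) - ∑ l ∈ Finset.Ico 1 i, ⟪q l, η i⟫ • q l with ht
    have IH' : ∀ l ∈ Finset.Ico 1 i, q l ∈ Φ ∧ ‖q l‖ = 1 ∧
        q l ∈ span ℝ ((fun j : Set.Icc 1 (min n r) => proj Φ (η j.1)) ''
          {j : Set.Icc 1 (min n r) | (j : ℕ) ≤ l}) ∧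
        (∀ m, 1 ≤ m → m < l → ⟪q m, q l⟫ = 0) := by
      intro l hl
      rw [Finset.mem_Ico] at hl
      obtain ⟨h1, h2, h3, h4, _⟩ := IH l hl.2 hl.1 (by omega)
      exact ⟨h1, h2, h3, h4⟩
    have htΦ : t ∈ Φ := by
      rw [ht]
      exact Submodule.sub_mem _ (proj_mem Φ _)
        (Submodule.sum_mem _ fun l hl => Submodule.smul_mem _ _ (IH' l hl).1)
    -- orthonormality among the earlier q's
    have hONlt : ∀ l ∈ Finset.Ico 1 i, ∀ m ∈ Finset.Ico 1 i, ⟪q l, q m⟫ = if l = m then (1:ℝ) else 0 := by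
      intro l hl m hm
      rw [Finset.mem_Ico] at hl hm
      rcases lt_trichotomy l m with h | h | h
      · rw [if_neg (Nat.ne_of_lt h)]
        exact (IH' m (Finset.mem_Ico.2 hm)).2.2.2 l hl.1 h
      · subst h
        rw [if_pos rfl, real_inner_self_eq_norm_sq, (IH' l (Finset.mem_Ico.2 hl)).2.1]; norm_num
      · rw [if_neg (Nat.ne_of_gt h), real_inner_comm]
        exact (IH' l (Finset.mem_Ico.2 hl)).2.2.2 m hm.1 h
    -- t is nonzero
    have htne : t ≠ 0 := by
      intro h0
      have heq : proj Φ (η i) = ∑ l ∈ Finset.Ico 1 i, ⟪q l, η i⟫ • q l := by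
        rw [ht, sub_eq_zero] at h0
        exact h0
      have hnm := hlin.notMem_span_image
        (s := {j : Set.Icc 1 (min n r) | (j : ℕ) < i}) (x := ⟨i, hiIcc⟩)
        (by simp)
      apply hnm
      show proj Φ (η i) ∈ _
      rw [heq]
      refine Submodule.sum_mem _ fun l hl => Submodule.smul_mem _ _ ?_
      have hl' := (IH' l hl).2.2.1
      refine Submodule.span_mono (Set.image_mono ?_) hl'
      intro x hx
      exact lt_of_le_of_lt hx (Finset.mem_Ico.1 hl).2
    have htnorm : 0 < ‖t‖ := norm_pos_iff.2 htne
    -- the inner products of earlier q's with t vanish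
    have hqt : ∀ l, 1 ≤ l → l < i → ⟪q l, t⟫ = 0 := by
      intro l h1l hli
      have hlmem : l ∈ Finset.Ico 1 i := Finset.mem_Ico.2 ⟨h1l, hli⟩
      rw [ht, inner_sub_right, inner_proj Φ (η i) (q l) (IH' l hlmem).1,
        onb_inner_single q (Finset.Ico 1 i) hONlt l hlmem (fun m => ⟪q m, η i⟫), sub_self]
    have hqiΦ : q i ∈ Φ := by rw [hqi]; exact Submodule.smul_mem _ _ htΦ
    have hqinorm : ‖q i‖ = 1 := by
      rw [hqi, norm_smul, norm_inv, norm_norm, inv_mul_cancel₀ htnorm.ne']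
    have hqlqi : ∀ l, 1 ≤ l → l < i → ⟪q l, q i⟫ = 0 := by
      intro l h1l hli
      rw [hqi, real_inner_smul_right, hqt l h1l hli, mul_zero]
    have hetat : ⟪η i, t⟫ = ‖t‖^2 := by
      have h1 : ⟪η i, t⟫ = ⟪proj Φ (η i), t⟫ := hproj_inner (η i) t htΦ
      have h2 : proj Φ (η i) = t + ∑ l ∈ Finset.Ico 1 i, ⟪q l, η i⟫ • q l := by
        rw [ht]; abel
      rw [h1, h2, inner_add_left, real_inner_self_eq_norm_sq, sum_inner]
      have : ∀ l ∈ Finset.Ico 1 i, ⟪(⟪q l, η i⟫ : ℝ) • q l, t⟫ = 0 := by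
        intro l hl
        rw [Finset.mem_Ico] at hl
        rw [real_inner_smul_left, hqt l hl.1 hl.2, mul_zero]
      rw [Finset.sum_congr rfl this, Finset.sum_const, smul_zero, add_zero]
    have hetaqi : ⟪η i, q i⟫ = ‖t‖ := by
      rw [hqi, real_inner_smul_right, hetat, sq]
      field_simp
    refine ⟨hqiΦ, hqinorm, ?_, hqlqi, ?_, ?_⟩
    · -- span membership
      rw [hqi]
      refine Submodule.smul_mem _ _ ?_
      rw [ht]
      refine Submodule.sub_mem _ ?_ ?_
      · exact Submodule.subset_span ⟨⟨i, hiIcc⟩, by simp, rfl⟩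
      · refine Submodule.sum_mem _ fun l hl => Submodule.smul_mem _ _ ?_
        have hl' := (IH' l hl).2.2.1
        refine Submodule.span_mono (Set.image_mono ?_) hl'
        intro x hx
        exact le_trans hx (le_of_lt (Finset.mem_Ico.1 hl).2)
    · rw [hetaqi]; exact htnorm
    · rw [hetaqi]
      have : (‖t‖ : ℝ) • q i = t := by
        rw [hqi, smul_smul, mul_inv_cancel₀ htnorm.ne', one_smul]
      rw [this, ht]; abel
  have qΦ : ∀ i ∈ Finset.Icc 1 k, q i ∈ Φ := fun i hi =>
    (GS i (Finset.mem_Icc.1 hi).1 (Finset.mem_Icc.1 hi).2).1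
  have qnorm : ∀ i ∈ Finset.Icc 1 k, ‖q i‖ = 1 := fun i hi =>
    (GS i (Finset.mem_Icc.1 hi).1 (Finset.mem_Icc.1 hi).2).2.1
  have qON : ∀ i ∈ Finset.Icc 1 k, ∀ j ∈ Finset.Icc 1 k, ⟪q i, q j⟫ = if i = j then (1:ℝ) else 0 := by
    intro i hi j hj
    rw [Finset.mem_Icc] at hi hj
    rcases lt_trichotomy i j with h | h | h
    · rw [if_neg (Nat.ne_of_lt h)]
      exact (GS j hj.1 hj.2).2.2.2.1 i hi.1 h
    · subst h
      rw [if_pos rfl, real_inner_self_eq_norm_sq, (GS i hi.1 hi.2).2.1]; norm_num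
    · rw [if_neg (Nat.ne_of_gt h), real_inner_comm]
      exact (GS i hi.1 hi.2).2.2.2.1 j hj.1 h
  have Mpos : ∀ i ∈ Finset.Icc 1 k, 0 < ⟪η i, q i⟫ := fun i hi =>
    (GS i (Finset.mem_Icc.1 hi).1 (Finset.mem_Icc.1 hi).2).2.2.2.2.1
  have GSf : ∀ i ∈ Finset.Icc 1 k,
      proj Φ (η i) = ⟪η i, q i⟫ • q i + ∑ l ∈ Finset.Ico 1 i, ⟪q l, η i⟫ • q l := fun i hi =>
    (GS i (Finset.mem_Icc.1 hi).1 (Finset.mem_Icc.1 hi).2).2.2.2.2.2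
  -- inner products of later q's with earlier η's vanish
  have hqeta0 : ∀ i m, 1 ≤ i → i < m → m ≤ k → ⟪η i, q m⟫ = 0 := by
    intro i m h1i him hmk
    have himem : i ∈ Finset.Icc 1 k := Finset.mem_Icc.2 ⟨h1i, by omega⟩
    have hmmem : m ∈ Finset.Icc 1 k := Finset.mem_Icc.2 ⟨by omega, hmk⟩
    rw [hproj_inner (η i) (q m) (qΦ m hmmem), GSf i himem, inner_add_left,
      real_inner_smul_left, qON i himem m hmmem, if_neg (by omega : i ≠ m), mul_zero, zero_add,
      sum_inner]
    refine Finset.sum_eq_zero fun l hl => ?_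
    rw [Finset.mem_Ico] at hl
    have hlmem : l ∈ Finset.Icc 1 k := Finset.mem_Icc.2 ⟨hl.1, by omega⟩
    rw [real_inner_smul_left, qON l hlmem m hmmem, if_neg (by omega : l ≠ m), mul_zero]
  -- ** decomposition of the Rayleigh quotient along the η's **
  have hdec : ∀ τ, 0 < τ → ∀ u : H, ∃ w, w ∈ Kᗮ ∧
      ⟪u, T τ u⟫ = (∑ i ∈ Finset.Icc 1 r, ⟪η i, u⟫^2 * Real.exp (-σ i * τ)) + ⟪w, T τ w⟫ ∧
      ‖u‖^2 = (∑ i ∈ Finset.Icc 1 r, ⟪η i, u⟫^2) + ‖w‖^2 := by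
    intro τ hτ u
    have hηONf : ∀ i ∈ Finset.Icc 1 r, ∀ j ∈ Finset.Icc 1 r, ⟪η i, η j⟫ = if i = j then (1:ℝ) else 0 := by
      intro i hi j hj
      exact hη i (Set.mem_Icc.2 (Finset.mem_Icc.1 hi)) j (Set.mem_Icc.2 (Finset.mem_Icc.1 hj))
    set s : H := ∑ i ∈ Finset.Icc 1 r, ⟪η i, u⟫ • η i with hs
    set w : H := u - s with hw
    have hsK : s ∈ K := by
      refine Submodule.sum_mem _ fun i hi => Submodule.smul_mem _ _ ?_
      exact Submodule.subset_span ⟨i, Set.mem_Icc.2 (Finset.mem_Icc.1 hi), rfl⟩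
    have hwK : w ∈ Kᗮ := by
      rw [Submodule.mem_orthogonal]
      intro v hv
      rw [hK] at hv
      induction hv using Submodule.span_induction with
      | mem x hx =>
        obtain ⟨m, hm, rfl⟩ := hx
        have hmf : m ∈ Finset.Icc 1 r := Finset.mem_Icc.2 (Set.mem_Icc.1 hm)
        rw [hw, inner_sub_right, hs, onb_inner_single η _ hηONf m hmf (fun i => ⟪η i, u⟫), sub_self]
      | zero => simp
      | add x y _ _ hx hy => rw [inner_add_left, hx, hy, add_zero]
      | smul t x _ hx => rw [real_inner_smul_left, hx, mul_zero]
    have husw : u = s + w := by rw [hw]; abel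
    have hTs : T τ s = ∑ i ∈ Finset.Icc 1 r, (⟪η i, u⟫ * Real.exp (-σ i * τ)) • η i := by
      rw [hs, map_sum]
      refine Finset.sum_congr rfl fun i hi => ?_
      rw [map_smul, hTeig τ hτ i (Set.mem_Icc.2 (Finset.mem_Icc.1 hi)), smul_smul]
    have hTwK : T τ w ∈ Kᗮ := hTinv τ hτ w hwK
    refine ⟨w, hwK, ?_, ?_⟩
    · have h1 : ⟪u, T τ u⟫ = ⟪u, T τ s⟫ + ⟪u, T τ w⟫ := by
        conv_lhs => rw [husw]
        rw [map_add, inner_add_right, ← husw]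
      have h2 : ⟪u, T τ s⟫ = ∑ i ∈ Finset.Icc 1 r, ⟪η i, u⟫^2 * Real.exp (-σ i * τ) := by
        rw [hTs, inner_sum]
        refine Finset.sum_congr rfl fun i hi => ?_
        rw [real_inner_smul_right, real_inner_comm u (η i)]
        ring
      have h3 : ⟪u, T τ w⟫ = ⟪w, T τ w⟫ := by
        conv_lhs => rw [husw]
        rw [inner_add_left, (Submodule.mem_orthogonal K _).1 hTwK s hsK, zero_add]
      rw [h1, h2, h3]
    · have hss : ⟪s, s⟫ = ∑ i ∈ Finset.Icc 1 r, ⟪η i, u⟫^2 := by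
        rw [hs, onb_inner_sum η _ hηONf]
        exact Finset.sum_congr rfl fun i _ => (sq _).symm
      have hsw : ⟪s, w⟫ = 0 := (Submodule.mem_orthogonal K w).1 hwK s hsK
      have hws : ⟪w, s⟫ = 0 := by rw [real_inner_comm]; exact hsw
      have : ‖u‖^2 = ⟪u, u⟫ := (real_inner_self_eq_norm_sq u).symm
      rw [this]
      conv_lhs => rw [husw]
      rw [inner_add_left, inner_add_right, inner_add_right, hss, hsw, hws,
        real_inner_self_eq_norm_sq]
      ring
  set M : ℝ := ⟪η k, q k⟫ with hM
  have hMpos : 0 < M := Mpos k (Finset.mem_Icc.2 ⟨hk1, le_rfl⟩)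
  -- ** upper bound **
  have hUB : ∀ τ, 0 < τ → lam τ k * Real.exp (σ k * τ) ≤ M^2 + Real.exp ((σ k - σ (k+1)) * τ) := by
    intro τ hτ
    obtain ⟨γ, hRD⟩ := hritz τ hτ
    obtain ⟨u, hu1, huΦ, huq, hulam⟩ := ritz_upper Φ (T τ) n (lam τ) γ hRD k hk1 hkn q
    obtain ⟨w, hwK, heq1, heq2⟩ := hdec τ hτ u
    have hkmem : k ∈ Finset.Icc 1 r := Finset.mem_Icc.2 ⟨hk1, hkr⟩
    -- the first k-1 coefficients vanish
    have hc0 : ∀ i ∈ Finset.Icc 1 (k-1), ⟪η i, u⟫ = 0 := by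
      intro i hi
      rw [Finset.mem_Icc] at hi
      have himem : i ∈ Finset.Icc 1 k := Finset.mem_Icc.2 ⟨hi.1, by omega⟩
      rw [hproj_inner (η i) u huΦ, GSf i himem, inner_add_left, real_inner_smul_left,
        huq i (Finset.mem_Icc.2 ⟨hi.1, hi.2⟩), mul_zero, zero_add, sum_inner]
      refine Finset.sum_eq_zero fun l hl => ?_
      rw [Finset.mem_Ico] at hl
      rw [real_inner_smul_left, huq l (Finset.mem_Icc.2 ⟨hl.1, by omega⟩), mul_zero]
    -- the k-th coefficient is bounded by M
    have hck : ⟪η k, u⟫^2 ≤ M^2 := by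
      have hkk : k ∈ Finset.Icc 1 k := Finset.mem_Icc.2 ⟨hk1, le_rfl⟩
      have h1 : ⟪η k, u⟫ = M * ⟪q k, u⟫ := by
        rw [hproj_inner (η k) u huΦ, GSf k hkk, inner_add_left, real_inner_smul_left, sum_inner]
        have : ∀ l ∈ Finset.Ico 1 k, ⟪(⟪q l, η k⟫ : ℝ) • q l, u⟫ = 0 := by
          intro l hl
          rw [Finset.mem_Ico] at hl
          rw [real_inner_smul_left, huq l (Finset.mem_Icc.2 ⟨hl.1, by omega⟩), mul_zero]
        rw [Finset.sum_congr rfl this, Finset.sum_const, smul_zero, add_zero, hM]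
      have h2 : |⟪q k, u⟫| ≤ 1 := by
        have := abs_real_inner_le_norm (q k) u
        rw [qnorm k (Finset.mem_Icc.2 ⟨hk1, le_rfl⟩), hu1, one_mul] at this
        exact this
      have h3 : ⟪q k, u⟫^2 ≤ 1 := by nlinarith [abs_nonneg (⟪q k, u⟫ : ℝ), sq_abs (⟪q k, u⟫ : ℝ)]
      rw [h1, mul_pow]
      nlinarith [sq_nonneg M]
    -- bound the sum
    have hsum_split : (∑ i ∈ Finset.Icc 1 r, ⟪η i, u⟫^2 * Real.exp (-σ i * τ))
        = ⟪η k, u⟫^2 * Real.exp (-σ k * τ)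
          + ∑ i ∈ (Finset.Icc 1 r).erase k, ⟪η i, u⟫^2 * Real.exp (-σ i * τ) :=
      (Finset.add_sum_erase _ _ hkmem).symm
    have herase_le : ∑ i ∈ (Finset.Icc 1 r).erase k, ⟪η i, u⟫^2 * Real.exp (-σ i * τ)
        ≤ Real.exp (-σ (k+1) * τ) * ∑ i ∈ (Finset.Icc 1 r).erase k, ⟪η i, u⟫^2 := by
      rw [Finset.mul_sum]
      refine Finset.sum_le_sum fun i hi => ?_
      have hine := Finset.ne_of_mem_erase hi
      have hiIcc := Finset.mem_of_mem_erase hi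
      rw [Finset.mem_Icc] at hiIcc
      by_cases hik : i < k
      · rw [hc0 i (Finset.mem_Icc.2 ⟨hiIcc.1, by omega⟩)]
        have := Real.exp_pos (-σ (k+1) * τ)
        nlinarith
      · have hki : k + 1 ≤ i := by omega
        have hσle : σ (k+1) ≤ σ i := hσmono (k+1) (Set.mem_Icc.2 ⟨by omega, by omega⟩)
          i (Set.mem_Icc.2 ⟨by omega, by omega⟩) hki
        have : Real.exp (-σ i * τ) ≤ Real.exp (-σ (k+1) * τ) := by
          apply Real.exp_le_exp.2
          nlinarith
        rw [mul_comm (Real.exp (-σ (k+1) * τ))]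
        exact mul_le_mul_of_nonneg_left this (sq_nonneg _)
    -- residual bound
    have hres : ⟪w, T τ w⟫ ≤ Real.exp (-σ (k+1) * τ) * ‖w‖^2 := by
      have h1 := hTres τ hτ w hwK
      have hσle : σ (k+1) ≤ σ (r+1) := hσmono (k+1) (Set.mem_Icc.2 ⟨by omega, by omega⟩)
        (r+1) (Set.mem_Icc.2 ⟨by omega, le_rfl⟩) (by omega)
      have h2 : Real.exp (-σ (r+1) * τ) ≤ Real.exp (-σ (k+1) * τ) := by
        apply Real.exp_le_exp.2
        nlinarith
      calc ⟪w, T τ w⟫ ≤ Real.exp (-σ (r+1) * τ) * ‖w‖^2 := h1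
        _ ≤ Real.exp (-σ (k+1) * τ) * ‖w‖^2 := mul_le_mul_of_nonneg_right h2 (sq_nonneg _)
    -- total mass bound
    have hmass : (∑ i ∈ (Finset.Icc 1 r).erase k, ⟪η i, u⟫^2) + ‖w‖^2 ≤ 1 := by
      have h1 : (∑ i ∈ Finset.Icc 1 r, ⟪η i, u⟫^2)
          = ⟪η k, u⟫^2 + ∑ i ∈ (Finset.Icc 1 r).erase k, ⟪η i, u⟫^2 :=
        (Finset.add_sum_erase _ _ hkmem).symm
      have h2 : ‖u‖^2 = 1 := by rw [hu1]; norm_num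
      nlinarith [sq_nonneg (⟪η k, u⟫ : ℝ)]
    have hmain : lam τ k ≤ M^2 * Real.exp (-σ k * τ) + Real.exp (-σ (k+1) * τ) := by
      have hexp_pos := Real.exp_pos (-σ k * τ)
      have hexp_pos2 := Real.exp_pos (-σ (k+1) * τ)
      have hsum_nonneg : (0:ℝ) ≤ ∑ i ∈ (Finset.Icc 1 r).erase k, ⟪η i, u⟫^2 :=
        Finset.sum_nonneg fun i _ => sq_nonneg _
      calc lam τ k ≤ ⟪u, T τ u⟫ := hulam
        _ = ⟪η k, u⟫^2 * Real.exp (-σ k * τ)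
            + (∑ i ∈ (Finset.Icc 1 r).erase k, ⟪η i, u⟫^2 * Real.exp (-σ i * τ)) + ⟪w, T τ w⟫ := by
            rw [heq1, hsum_split]
        _ ≤ M^2 * Real.exp (-σ k * τ)
            + Real.exp (-σ (k+1) * τ) * ((∑ i ∈ (Finset.Icc 1 r).erase k, ⟪η i, u⟫^2) + ‖w‖^2) := by
            have := mul_le_mul_of_nonneg_right hck (le_of_lt hexp_pos)
            nlinarith [herase_le, hres]
        _ ≤ M^2 * Real.exp (-σ k * τ) + Real.exp (-σ (k+1) * τ) * 1 :=
            add_le_add_right (mul_le_mul_of_nonneg_left hmass (le_of_lt hexp_pos2)) _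
        _ = M^2 * Real.exp (-σ k * τ) + Real.exp (-σ (k+1) * τ) := by ring
    have hE : Real.exp (-σ k * τ) * Real.exp (σ k * τ) = 1 := by
      rw [← Real.exp_add]
      ring_nf
      exact Real.exp_zero
    have hE2 : Real.exp (-σ (k+1) * τ) * Real.exp (σ k * τ) = Real.exp ((σ k - σ (k+1)) * τ) := by
      rw [← Real.exp_add]
      ring_nf
    calc lam τ k * Real.exp (σ k * τ)
        ≤ (M^2 * Real.exp (-σ k * τ) + Real.exp (-σ (k+1) * τ)) * Real.exp (σ k * τ) :=
          mul_le_mul_of_nonneg_right hmain (le_of_lt (Real.exp_pos _))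
      _ = M^2 + Real.exp ((σ k - σ (k+1)) * τ) := by
          rw [add_mul, mul_assoc, hE, hE2, mul_one]
  -- ** lower bound **
  have hLB : ∃ D : ℝ, 0 ≤ D ∧ ∀ τ, 0 < τ →
      M^2 - D * Real.exp (-(if 2 ≤ k then σ k - σ (k-1) else 1) * τ) ≤ lam τ k * Real.exp (σ k * τ) := by
    set δ : ℝ := if 2 ≤ k then σ k - σ (k-1) else 1 with hδdef
    have hδpos : 0 < δ := by
      rw [hδdef]; split_ifs with h
      · linarith [hgap₁ h]
      · norm_num
    have hδle : ∀ i ∈ Finset.Icc 1 (k-1), δ ≤ σ k - σ i := by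
      intro i hi
      rw [Finset.mem_Icc] at hi
      have hk2 : 2 ≤ k := by omega
      have hσi : σ i ≤ σ (k-1) := hσmono i (Set.mem_Icc.2 ⟨hi.1, by omega⟩)
        (k-1) (Set.mem_Icc.2 ⟨by omega, by omega⟩) hi.2
      rw [hδdef, if_pos hk2]
      linarith
    -- uniform coefficient control
    obtain ⟨C, hC0, hC⟩ := tri_bound k (fun i l => ⟪η i, q l⟫)
      (fun m hm => by
        rw [Finset.mem_Icc] at hm
        exact Mpos m (Finset.mem_Icc.2 ⟨hm.1, by omega⟩))
      (fun i hi l hl => by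
        rw [Finset.mem_Icc] at hi hl
        have h1 : ‖η i‖ = 1 := hηnorm i (Set.mem_Icc.2 ⟨hi.1, by omega⟩)
        have h2 : ‖q l‖ = 1 := qnorm l (Finset.mem_Icc.2 ⟨hl.1, by omega⟩)
        have := abs_real_inner_le_norm (η i) (q l)
        rw [h1, h2, one_mul] at this
        exact this)
    set D₀ : ℝ := M^2 * k * C^2 + 2*M*k*C with hD₀
    have hD₀0 : 0 ≤ D₀ := by
      rw [hD₀]
      have h1 : (0:ℝ) ≤ M := hMpos.le
      have h2 : (0:ℝ) ≤ (k:ℝ) := Nat.cast_nonneg k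
      nlinarith [mul_nonneg (mul_nonneg (mul_nonneg h1 h1) h2) (mul_nonneg hC0 hC0),
        mul_nonneg (mul_nonneg h1 h2) hC0]
    refine ⟨D₀^2/4, by positivity, ?_⟩
    intro τ hτ
    obtain ⟨γ, hRD⟩ := hritz τ hτ
    obtain ⟨a, hsum1, hulam⟩ := ritz_lower Φ (T τ) n (lam τ) γ hRD k hk1 hkn q qON qΦ
    set u : H := ∑ m ∈ Finset.Icc 1 k, a m • q m with hu
    obtain ⟨w, hwK, heq1, heq2⟩ := hdec τ hτ u
    have hunorm : ‖u‖^2 = 1 := by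
      rw [← real_inner_self_eq_norm_sq, hu, onb_inner_sum q _ qON]
      rw [← hsum1]
      exact Finset.sum_congr rfl fun m _ => (sq _).symm
    -- coefficient formula
    have hc_formula : ∀ i ∈ Finset.Icc 1 k, ⟪η i, u⟫ = ∑ l ∈ Finset.Icc 1 i, a l * ⟪η i, q l⟫ := by
      intro i hi
      rw [Finset.mem_Icc] at hi
      rw [hu, inner_sum]
      rw [Finset.sum_congr rfl (fun l _ => real_inner_smul_right (η i) (q l) (a l))]
      refine (Finset.sum_subset (Finset.Icc_subset_Icc_right hi.2) ?_).symm
      intro l hl hl'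
      rw [Finset.mem_Icc] at hl
      rw [Finset.mem_Icc, not_and_or] at hl'
      have hil : i < l := by omega
      rw [hqeta0 i l hi.1 hil hl.2, mul_zero]
    set E : ℝ := ∑ i ∈ Finset.Icc 1 (k-1), ⟪η i, u⟫^2 with hE
    have hE0 : 0 ≤ E := Finset.sum_nonneg fun i _ => sq_nonneg _
    set e : ℝ := Real.sqrt E with he
    have he0 : 0 ≤ e := Real.sqrt_nonneg E
    have he2 : e^2 = E := Real.sq_sqrt hE0
    have hci_le : ∀ i ∈ Finset.Icc 1 (k-1), |⟪η i, u⟫| ≤ e := by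
      intro i hi
      have h1 : ⟪η i, u⟫^2 ≤ E := by
        rw [hE]
        exact Finset.single_le_sum (f := fun j => (⟪η j, u⟫:ℝ)^2) (fun j _ => sq_nonneg _) hi
      rw [he, ← Real.sqrt_sq_eq_abs]
      exact Real.sqrt_le_sqrt h1
    have ha_le : ∀ m ∈ Finset.Icc 1 (k-1), |a m| ≤ C * e := by
      refine hC a e he0 ?_
      intro i hi
      have hik : i ∈ Finset.Icc 1 k := by
        rw [Finset.mem_Icc] at hi ⊢
        omega
      have h := hc_formula i hik
      rw [← h]
      exact hci_le i hi
    have hk1k : k - 1 + 1 = k := by omega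
    -- splitting of sums at k
    have hsq_split : ∑ m ∈ Finset.Icc 1 k, (a m)^2
        = (∑ m ∈ Finset.Icc 1 (k-1), (a m)^2) + (a k)^2 := by
      have h := Finset.sum_Icc_succ_top (by omega : 1 ≤ k - 1 + 1) (fun m => (a m)^2)
      rw [hk1k] at h
      exact h
    have hck_split : ⟪η k, u⟫
        = (∑ l ∈ Finset.Icc 1 (k-1), a l * ⟪η k, q l⟫) + a k * M := by
      have h := Finset.sum_Icc_succ_top (by omega : 1 ≤ k - 1 + 1) (fun l => a l * ⟪η k, q l⟫)
      rw [hk1k] at h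
      rw [hc_formula k (Finset.mem_Icc.2 ⟨hk1, le_rfl⟩), h, hM]
    set sK : ℝ := ∑ l ∈ Finset.Icc 1 (k-1), a l * ⟪η k, q l⟫ with hsK
    have hsK_abs : |sK| ≤ (k:ℝ) * C * e := by
      calc |sK| ≤ ∑ l ∈ Finset.Icc 1 (k-1), |a l * ⟪η k, q l⟫| := Finset.abs_sum_le_sum_abs _ _
        _ ≤ ∑ l ∈ Finset.Icc 1 (k-1), C * e := by
            refine Finset.sum_le_sum fun l hl => ?_
            rw [Finset.mem_Icc] at hl
            have h1 := ha_le l (Finset.mem_Icc.2 hl)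
            have h2 : |(⟪η k, q l⟫:ℝ)| ≤ 1 := by
              have hn1 : ‖η k‖ = 1 := hηnorm k (Set.mem_Icc.2 ⟨hk1, hkr⟩)
              have hn2 : ‖q l‖ = 1 := qnorm l (Finset.mem_Icc.2 ⟨hl.1, by omega⟩)
              have := abs_real_inner_le_norm (η k) (q l)
              rw [hn1, hn2, one_mul] at this
              exact this
            rw [abs_mul]
            calc |a l| * |(⟪η k, q l⟫:ℝ)| ≤ (C*e) * 1 :=
                  mul_le_mul h1 h2 (abs_nonneg _) (by positivity)
              _ = C * e := mul_one _
        _ ≤ (k:ℝ) * C * e := by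
            rw [Finset.sum_const, Nat.card_Icc]
            have h1 : ((k - 1 + 1 - 1 : ℕ):ℝ) ≤ (k:ℝ) := by
              have : (k - 1 + 1 - 1 : ℕ) ≤ k := by omega
              exact_mod_cast this
            have h2 : (0:ℝ) ≤ C * e := by positivity
            rw [nsmul_eq_mul]
            nlinarith
    have hsumA : ∑ m ∈ Finset.Icc 1 (k-1), (a m)^2 ≤ (k:ℝ) * (C*e)^2 := by
      calc ∑ m ∈ Finset.Icc 1 (k-1), (a m)^2 ≤ ∑ m ∈ Finset.Icc 1 (k-1), (C*e)^2 := by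
            refine Finset.sum_le_sum fun m hm => ?_
            have h1 := ha_le m hm
            calc (a m)^2 = |a m|^2 := (sq_abs _).symm
              _ ≤ (C*e)^2 := by
                  have h2 : (0:ℝ) ≤ C * e := by positivity
                  nlinarith [abs_nonneg (a m)]
        _ ≤ (k:ℝ) * (C*e)^2 := by
            rw [Finset.sum_const, Nat.card_Icc]
            have h1 : ((k - 1 + 1 - 1 : ℕ):ℝ) ≤ (k:ℝ) := by
              have : (k - 1 + 1 - 1 : ℕ) ≤ k := by omega
              exact_mod_cast this
            rw [nsmul_eq_mul]
            nlinarith [sq_nonneg (C*e)]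
    have hak1 : (a k)^2 ≤ 1 := by
      have h1 : (0:ℝ) ≤ ∑ m ∈ Finset.Icc 1 (k-1), (a m)^2 :=
        Finset.sum_nonneg fun m _ => sq_nonneg _
      rw [hsq_split] at hsum1
      linarith
    have hak2 : 1 - (k:ℝ) * (C*e)^2 ≤ (a k)^2 := by
      rw [hsq_split] at hsum1
      linarith
    have hakabs : |a k| ≤ 1 := by
      rw [← Real.sqrt_sq_eq_abs]
      calc Real.sqrt ((a k)^2) ≤ Real.sqrt 1 := Real.sqrt_le_sqrt hak1
        _ = 1 := Real.sqrt_one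
    have he_le1 : e ≤ 1 := by
      have h1 : E ≤ ∑ i ∈ Finset.Icc 1 r, ⟪η i, u⟫^2 := by
        rw [hE]
        refine Finset.sum_le_sum_of_subset_of_nonneg ?_ (fun i _ _ => sq_nonneg _)
        exact Finset.Icc_subset_Icc_right (by omega)
      have h2 : ∑ i ∈ Finset.Icc 1 r, ⟪η i, u⟫^2 ≤ 1 := by
        have := sq_nonneg ‖w‖
        rw [hunorm] at heq2
        nlinarith
      have h3 : E ≤ 1 := le_trans h1 h2
      nlinarith [he0, he2]
    have he2e : e^2 ≤ e := by nlinarith [he0, he_le1]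
    -- lower bound for the k-th coefficient
    have hck_ge : M^2 - D₀ * e ≤ ⟪η k, u⟫^2 := by
      have hexp : ⟪η k, u⟫^2 = (a k)^2*M^2 + 2*(a k * M * sK) + sK^2 := by
        rw [hck_split]; ring
      have hstep1 : M^2 - M^2*(k:ℝ)*C^2*e^2 ≤ (a k)^2 * M^2 := by
        have h5 := mul_le_mul_of_nonneg_right hak2 (sq_nonneg M)
        have heq : (1 - (k:ℝ)*(C*e)^2) * M^2 = M^2 - M^2*(k:ℝ)*C^2*e^2 := by ring
        linarith
      have hstep2 : -(2*M*((k:ℝ)*C*e)) ≤ 2*(a k * M * sK) := by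
        have h1 : |a k * sK| ≤ 1 * ((k:ℝ)*C*e) :=
          (abs_mul _ _).le.trans (mul_le_mul hakabs hsK_abs (abs_nonneg _) zero_le_one)
        rw [one_mul] at h1
        have h2 := neg_abs_le (a k * sK)
        have h3 : -((k:ℝ)*C*e) ≤ a k * sK := by
          have := (abs_le.1 h1).1
          linarith
        have hM0 : (0:ℝ) ≤ 2*M := by linarith [hMpos.le]
        have h4 := mul_le_mul_of_nonneg_left h3 hM0
        have heq1 : 2*(a k * M * sK) = 2*M*(a k * sK) := by ring
        have heq2 : 2*M*(-((k:ℝ)*C*e)) = -(2*M*((k:ℝ)*C*e)) := by ring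
        linarith
      have hstep3 : (0:ℝ) ≤ sK^2 := sq_nonneg _
      have hstep4 : M^2*(k:ℝ)*C^2*e^2 ≤ M^2*(k:ℝ)*C^2*e := by
        have h0 : (0:ℝ) ≤ M^2*(k:ℝ)*C^2 := by positivity
        calc M^2*(k:ℝ)*C^2*e^2 = (M^2*(k:ℝ)*C^2)*e^2 := by ring
          _ ≤ (M^2*(k:ℝ)*C^2)*e := mul_le_mul_of_nonneg_left he2e h0
          _ = M^2*(k:ℝ)*C^2*e := by ring
      rw [hexp, hD₀]
      linarith [hstep1, hstep2, hstep3, hstep4]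
    -- assembling the lower bound for the Rayleigh quotient
    have hS_le : ∑ i ∈ Finset.Icc 1 k, ⟪η i, u⟫^2 * Real.exp (-σ i * τ) ≤ lam τ k := by
      have h1 : ∑ i ∈ Finset.Icc 1 k, ⟪η i, u⟫^2 * Real.exp (-σ i * τ)
          ≤ ∑ i ∈ Finset.Icc 1 r, ⟪η i, u⟫^2 * Real.exp (-σ i * τ) := by
        refine Finset.sum_le_sum_of_subset_of_nonneg (Finset.Icc_subset_Icc_right hkr) ?_
        intro i _ _
        positivity
      have h2 : (0:ℝ) ≤ ⟪w, T τ w⟫ := hTpos τ hτ w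
      calc ∑ i ∈ Finset.Icc 1 k, ⟪η i, u⟫^2 * Real.exp (-σ i * τ)
          ≤ ∑ i ∈ Finset.Icc 1 r, ⟪η i, u⟫^2 * Real.exp (-σ i * τ) := h1
        _ ≤ ⟪u, T τ u⟫ := by rw [heq1]; linarith
        _ ≤ lam τ k := hulam
    have hmain : (∑ i ∈ Finset.Icc 1 k, ⟪η i, u⟫^2 * Real.exp ((σ k - σ i) * τ))
        ≤ lam τ k * Real.exp (σ k * τ) := by
      have h1 := mul_le_mul_of_nonneg_right hS_le (le_of_lt (Real.exp_pos (σ k * τ)))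
      rw [Finset.sum_mul] at h1
      have h2 : ∀ i ∈ Finset.Icc 1 k, ⟪η i, u⟫^2 * Real.exp (-σ i * τ) * Real.exp (σ k * τ)
          = ⟪η i, u⟫^2 * Real.exp ((σ k - σ i) * τ) := by
        intro i _
        rw [mul_assoc, ← Real.exp_add]
        congr 2
        ring
      rw [Finset.sum_congr rfl h2] at h1
      exact h1
    have hsum_split2 : ∑ i ∈ Finset.Icc 1 k, ⟪η i, u⟫^2 * Real.exp ((σ k - σ i) * τ)
        = (∑ i ∈ Finset.Icc 1 (k-1), ⟪η i, u⟫^2 * Real.exp ((σ k - σ i) * τ)) + ⟪η k, u⟫^2 := by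
      have h := Finset.sum_Icc_succ_top (by omega : 1 ≤ k - 1 + 1)
        (fun i => ⟪η i, u⟫^2 * Real.exp ((σ k - σ i) * τ))
      rw [hk1k] at h
      rw [h, sub_self, zero_mul, Real.exp_zero, mul_one]
    have hlow_terms : Real.exp (δ * τ) * E ≤
        ∑ i ∈ Finset.Icc 1 (k-1), ⟪η i, u⟫^2 * Real.exp ((σ k - σ i) * τ) := by
      rw [hE, Finset.mul_sum]
      refine Finset.sum_le_sum fun i hi => ?_
      have h1 : Real.exp (δ * τ) ≤ Real.exp ((σ k - σ i) * τ) := by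
        apply Real.exp_le_exp.2
        exact mul_le_mul_of_nonneg_right (hδle i hi) (le_of_lt hτ)
      rw [mul_comm (Real.exp (δ * τ))]
      exact mul_le_mul_of_nonneg_left h1 (sq_nonneg _)
    -- the quadratic inequality in e
    have hquad : -(D₀^2/4) * Real.exp (-δ * τ) ≤ Real.exp (δ * τ) * e^2 - D₀ * e := by
      set P : ℝ := Real.exp (δ * τ / 2) with hP
      set Q : ℝ := Real.exp (-(δ * τ) / 2) with hQ
      have hPQ : P * Q = 1 := by
        rw [hP, hQ, ← Real.exp_add]
        ring_nf
        exact Real.exp_zero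
      have hP2 : P^2 = Real.exp (δ * τ) := by
        rw [hP, sq, ← Real.exp_add]
        congr 1
        ring
      have hQ2 : Q^2 = Real.exp (-δ * τ) := by
        rw [hQ, sq, ← Real.exp_add]
        congr 1
        ring
      have hexpand : (e*P - (D₀/2)*Q)^2 = e^2*P^2 - D₀*e*(P*Q) + (D₀^2/4)*Q^2 := by ring
      have hnn := sq_nonneg (e*P - (D₀/2)*Q)
      rw [hexpand, hPQ, hP2, hQ2, mul_one] at hnn
      linarith
    calc M^2 - D₀^2/4 * Real.exp (-δ * τ)
        ≤ Real.exp (δ * τ) * e^2 - D₀ * e + M^2 := by linarith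
      _ = Real.exp (δ * τ) * E + (M^2 - D₀ * e) := by rw [← he2]; ring
      _ ≤ (∑ i ∈ Finset.Icc 1 (k-1), ⟪η i, u⟫^2 * Real.exp ((σ k - σ i) * τ)) + ⟪η k, u⟫^2 := by
          have := hck_ge
          linarith [hlow_terms]
      _ = ∑ i ∈ Finset.Icc 1 k, ⟪η i, u⟫^2 * Real.exp ((σ k - σ i) * τ) := hsum_split2.symm
      _ ≤ lam τ k * Real.exp (σ k * τ) := hmain
  obtain ⟨D, hD0, hDle⟩ := hLB
  set δ : ℝ := if 2 ≤ k then σ k - σ (k-1) else 1 with hδdef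
  have hδpos : 0 < δ := by
    rw [hδdef]
    split_ifs with h
    · linarith [hgap₁ h]
    · norm_num
  -- ** squeeze **
  have hexp_lim : ∀ c : ℝ, 0 < c → Tendsto (fun τ : ℝ => Real.exp (-c * τ)) atTop (nhds 0) := by
    intro c hc
    apply Real.tendsto_exp_atBot.comp
    have h2 : Tendsto (fun τ : ℝ => c * τ) atTop atTop :=
      Tendsto.const_mul_atTop hc tendsto_id
    have h3 : Tendsto (fun τ : ℝ => -(c * τ)) atTop atBot := tendsto_neg_atTop_atBot.comp h2
    convert h3 using 2 with τ
    ring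
  have hlow : Tendsto (fun τ : ℝ => M^2 - D * Real.exp (-δ * τ)) atTop (nhds (M^2)) := by
    have := (hexp_lim δ hδpos).const_mul D
    have h4 := tendsto_const_nhds (α := ℝ) (x := M^2) (f := atTop).sub this
    simpa using h4
  have hup : Tendsto (fun τ : ℝ => M^2 + Real.exp ((σ k - σ (k+1)) * τ)) atTop (nhds (M^2)) := by
    have hneg : 0 < σ (k+1) - σ k := by linarith
    have h1 := hexp_lim _ hneg
    have h2 : (fun τ : ℝ => Real.exp ((σ k - σ (k+1)) * τ))
        = fun τ : ℝ => Real.exp (-(σ (k+1) - σ k) * τ) := by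
      funext τ; ring_nf
    have h4 := tendsto_const_nhds (α := ℝ) (x := M^2) (f := atTop).add (h2 ▸ h1)
    simpa using h4
  have : (⟪η k, q k⟫ : ℝ)^2 = M^2 := by rw [hM]
  rw [this]
  refine tendsto_of_tendsto_of_tendsto_of_le_of_le' hlow hup ?_ ?_
  · filter_upwards [eventually_gt_atTop (0:ℝ)] with τ hτ
    exact hDle τ hτ
  · filter_upwards [eventually_gt_atTop (0:ℝ)] with τ hτ
    exact hUB τ hτ

end
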